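/- The diagonal entries of the triangular matrix F^{|j|} are strictly decreasing in absolute value: for every j ∈ ℤ and every m ≥ 1, |F^{|j|}_{m+1,m+1}| < |F^{|j|}_{m,m}|, where F^{|j|}_{m,m} = a^{|j|,m-1}_{m,m+|j|} with a^{j,k}_{m,n} given by the explicit Zernike coefficient formula. -/

import Mathlib

open Real

/-- The explicit matrix elements `a^{j,k}_{m,n}` of the linearized EIT forward map
in the Zernike/Fourier bases. -/
noncomputable def acoef (j : ℤ) (k : ℕ) (m n : ℤ) : ℝ :=
  if n = m + j ∧ (k : ℤ) < min |m| |n| ∧ m * n > 0 then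
    -(1 / Real.sqrt π) * Real.sqrt ((j.natAbs : ℝ) + 2 * k + 1) /
        (((min |m| |n| : ℤ) : ℝ) + (j.natAbs : ℝ) + k) *
      ∏ i ∈ Finset.Icc 1 k,
        (((min |m| |n| : ℤ) : ℝ) - i) / ((j.natAbs : ℝ) + ((min |m| |n| : ℤ) : ℝ) + k - i)
  else 0

/-- The entries of the infinite lower triangular matrix `F^{|j|}`:
`F^{|j|}_{m,k} = a^{|j|,k-1}_{m,m+|j|}` for `1 ≤ k ≤ m`, zero otherwise. -/
noncomputable def Fmat (j : ℤ) (m k : ℕ) : ℝ :=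
  if 1 ≤ k ∧ k ≤ m then acoef |j| (k - 1) (m : ℤ) ((m : ℤ) + |j|) else 0

/-- Closed form for the diagonal entries. -/
lemma Fmat_diag (j : ℤ) (m : ℕ) (hm : 1 ≤ m) :
    Fmat j m m = -(1 / Real.sqrt π) * Real.sqrt ((j.natAbs : ℝ) + 2 * m - 1) /
      ((j.natAbs : ℝ) + 2 * m - 1) *
      ∏ i ∈ Finset.Icc 1 (m - 1), ((m : ℝ) - i) / ((j.natAbs : ℝ) + 2 * m - 1 - i) := by
  have hm0 : (0:ℤ) < (m:ℤ) := by exact_mod_cast hm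
  have hj : (0:ℤ) ≤ |j| := abs_nonneg j
  have hmin : min (abs (m:ℤ)) (abs ((m:ℤ) + |j|)) = (m:ℤ) := by
    rw [abs_of_pos hm0, abs_of_pos (by omega : (0:ℤ) < (m:ℤ) + |j|)]
    omega
  have hcond : ((m:ℤ) + |j| = (m:ℤ) + |j|) ∧
      ((m - 1 : ℕ) : ℤ) < min (abs (m:ℤ)) (abs ((m:ℤ) + |j|))
      ∧ (m:ℤ) * ((m:ℤ) + |j|) > 0 := by
    refine ⟨rfl, ?_, ?_⟩
    · rw [hmin]; omega
    · positivity
  have hnatAbs : (|j|).natAbs = j.natAbs := Int.natAbs_abs j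
  rw [Fmat, if_pos ⟨hm, le_refl m⟩, acoef, if_pos hcond, hmin, hnatAbs]
  have hc : ((m - 1 : ℕ) : ℝ) = (m : ℝ) - 1 := by
    have : (1:ℕ) ≤ m := hm
    push_cast [this]; ring
  rw [hc]
  push_cast
  congr 1
  · ring_nf
  · exact Finset.prod_congr rfl fun x _ => by ring

/-- The key product inequality. -/
lemma keyprod (J : ℝ) (hJ : 0 ≤ J) (n : ℕ) :
    ∏ i ∈ Finset.Icc 1 (n+1), ((n:ℝ) + 2 - i) / (J + 2*n + 3 - i)
      ≤ ((n:ℝ)+1)/(J+2*n+2) *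
        ∏ i ∈ Finset.Icc 1 n, ((n:ℝ) + 1 - i) / (J + 2*n + 1 - i) := by
  rw [← Finset.Ico_add_one_right_eq_Icc, ← Finset.Ico_add_one_right_eq_Icc, Finset.prod_Ico_eq_prod_range,
    Finset.prod_Ico_eq_prod_range]
  simp only [Nat.add_sub_cancel]
  rw [Finset.prod_range_succ', mul_comm]
  have h0 : ((n:ℝ) + 2 - ((1 + 0 : ℕ):ℝ)) / (J + 2*n + 3 - ((1 + 0 : ℕ):ℝ))
      = ((n:ℝ)+1)/(J+2*n+2) := by push_cast; ring_nf
  rw [h0]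
  apply mul_le_mul_of_nonneg_left _ (by positivity)
  apply Finset.prod_le_prod
  · intro i hi
    rw [Finset.mem_range] at hi
    have hi' : (i:ℝ) + 1 ≤ n := by exact_mod_cast hi
    apply div_nonneg <;> push_cast <;> linarith
  · intro i hi
    rw [Finset.mem_range] at hi
    have hi' : (i:ℝ) + 1 ≤ n := by exact_mod_cast hi
    push_cast
    rw [div_le_div_iff₀ (by linarith) (by linarith)]
    nlinarith

/-- The absolute values of the diagonal entries of `F^{|j|}` are strictly decreasing. -/
theorem Fmat_diag_strict_anti (j : ℤ) (m : ℕ) (hm : 1 ≤ m) :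
    |Fmat j (m + 1) (m + 1)| < |Fmat j m m| := by
  obtain ⟨n, rfl⟩ : ∃ n, m = n + 1 := ⟨m - 1, by omega⟩
  set J : ℝ := (j.natAbs : ℝ) with hJdef
  have hJ : (0:ℝ) ≤ J := Nat.cast_nonneg _
  set X : ℝ := J + 2*n + 1 with hXdef
  set Y : ℝ := J + 2*n + 3 with hYdef
  have hX : (0:ℝ) < X := by positivity
  have hY : (0:ℝ) < Y := by positivity
  set P1 : ℝ := ∏ i ∈ Finset.Icc 1 n, ((n:ℝ) + 1 - i) / (J + 2*n + 1 - i) with hP1def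
  set P2 : ℝ := ∏ i ∈ Finset.Icc 1 (n+1), ((n:ℝ) + 2 - i) / (J + 2*n + 3 - i) with hP2def
  have hP1pos : 0 < P1 := by
    apply Finset.prod_pos
    intro i hi
    rw [Finset.mem_Icc] at hi
    have h1 : (1:ℝ) ≤ (i:ℝ) := by exact_mod_cast hi.1
    have h2 : (i:ℝ) ≤ n := by exact_mod_cast hi.2
    apply div_pos <;> linarith
  have hP2pos : 0 < P2 := by
    apply Finset.prod_pos
    intro i hi
    rw [Finset.mem_Icc] at hi
    have h1 : (1:ℝ) ≤ (i:ℝ) := by exact_mod_cast hi.1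
    have h2 : (i:ℝ) ≤ (n:ℝ) + 1 := by exact_mod_cast hi.2
    apply div_pos <;> linarith
  have e1 : Fmat j (n+1) (n+1) = -(1 / Real.sqrt π) * Real.sqrt X / X * P1 := by
    rw [Fmat_diag j (n+1) (by omega)]
    simp only [Nat.add_sub_cancel]
    have hx : J + 2 * ((n:ℕ)+1 : ℕ) - 1 = X := by push_cast; ring
    push_cast at hx ⊢
    rw [hx]
  have e2 : Fmat j (n+2) (n+2) = -(1 / Real.sqrt π) * Real.sqrt Y / Y * P2 := by
    rw [Fmat_diag j (n+2) (by omega)]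
    simp only [show n+2-1 = n+1 from rfl]
    have hx : J + 2 * ((n:ℕ)+2 : ℕ) - 1 = Y := by push_cast; ring
    push_cast at hx ⊢
    rw [hx]
  have hsπ : (0:ℝ) < Real.sqrt π := Real.sqrt_pos.2 Real.pi_pos
  have habs1 : |Fmat j (n+1) (n+1)| = 1 / Real.sqrt π * Real.sqrt X / X * P1 := by
    rw [e1, show -(1 / Real.sqrt π) * Real.sqrt X / X * P1
      = -(1 / Real.sqrt π * Real.sqrt X / X * P1) by ring, abs_neg, abs_of_nonneg]
    have := hP1pos.le
    positivity
  have habs2 : |Fmat j (n+2) (n+2)| = 1 / Real.sqrt π * Real.sqrt Y / Y * P2 := by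
    rw [e2, show -(1 / Real.sqrt π) * Real.sqrt Y / Y * P2
      = -(1 / Real.sqrt π * Real.sqrt Y / Y * P2) by ring, abs_neg, abs_of_nonneg]
    have := hP2pos.le
    positivity
  have hsX : (0:ℝ) < Real.sqrt X := Real.sqrt_pos.2 hX
  have hsY : (0:ℝ) < Real.sqrt Y := Real.sqrt_pos.2 hY
  have hle : Real.sqrt X ≤ Real.sqrt Y := Real.sqrt_le_sqrt (by rw [hXdef, hYdef]; linarith)
  have key2 : Real.sqrt Y / Y * (((n:ℝ)+1)/(J+2*n+2)) < Real.sqrt X / X := by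
    rw [Real.sqrt_div_self', Real.sqrt_div_self', div_mul_div_comm, one_mul,
      div_lt_div_iff₀ (by positivity) hsX]
    have h1 : ((n:ℝ)+1) * Real.sqrt X ≤ ((n:ℝ)+1) * Real.sqrt Y :=
      mul_le_mul_of_nonneg_left hle (by positivity)
    have h2 : ((n:ℝ)+1) * Real.sqrt Y < (J+2*n+2) * Real.sqrt Y := by
      apply mul_lt_mul_of_pos_right _ hsY
      linarith
    nlinarith
  have hkp : P2 ≤ ((n:ℝ)+1)/(J+2*n+2) * P1 := keyprod J hJ n
  rw [show n + 1 + 1 = n + 2 from rfl, habs1, habs2]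
  calc 1 / Real.sqrt π * Real.sqrt Y / Y * P2
      ≤ 1 / Real.sqrt π * Real.sqrt Y / Y * (((n:ℝ)+1)/(J+2*n+2) * P1) := by
        apply mul_le_mul_of_nonneg_left hkp (by positivity)
    _ = 1 / Real.sqrt π * (Real.sqrt Y / Y * (((n:ℝ)+1)/(J+2*n+2)) * P1) := by ring
    _ < 1 / Real.sqrt π * (Real.sqrt X / X * P1) := by
        apply mul_lt_mul_of_pos_left _ (by positivity)
        exact mul_lt_mul_of_pos_right key2 hP1pos
    _ = 1 / Real.sqrt π * Real.sqrt X / X * P1 := by ring
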